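/- The solution of the minimum-norm projection subproblem in the fixed-point algorithm has the explicit form: given g ∈ (L²[t₀,t_f])^{|P|}, the projection of g onto Λ is given componentwise by (P_Λ[g])_p(t) = [g_p(t) + v_ij]₊ for p ∈ P_ij, where for each O-D pair (i,j) the scalar v_ij is chosen so that Σ_{p∈P_ij} ∫_{t₀}^{t_f} [g_p(t) + v_ij]₊ dt = Q_ij. -/

import Mathlib

open Set MeasureTheory

/-- Product of two `L²` functions is integrable. -/
lemma int_mul_L2 {α : Type*} [MeasurableSpace α] {μ : Measure α} {f g : α → ℝ}
    (hf : MemLp f 2 μ) (hg : MemLp g 2 μ) : Integrable (fun t => f t * g t) μ := by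
  have h : MemLp (f • g) 1 μ :=
    hg.smul hf
  have := memLp_one_iff_integrable.mp h
  simpa [Pi.smul_apply, smul_eq_mul, Pi.mul_def] using this

/-- Pointwise key inequality for the projection argument. -/
lemma key_pt {x a b : ℝ} (hx : 0 ≤ x) :
    b * (x - max (a + b) 0) ≤ (x - max (a + b) 0) * (max (a + b) 0 - a) := by
  rcases le_or_gt 0 (a + b) with h | h
  · rw [max_eq_left h]
    nlinarith
  · rw [max_eq_right h.le]
    nlinarith

theorem stmt17 {ι W : Type*} [Fintype ι] [Fintype W] [DecidableEq W]
    (od : ι → W) (hod : ∀ w, ∃ p, od p = w)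
    (t₀ t_f : ℝ) (ht : t₀ < t_f)
    (Q : W → ℝ) (hQ : ∀ w, 0 < Q w)
    (μ : Measure ℝ) (hμ : μ = volume.restrict (Icc t₀ t_f))
    (Λ : Set (ι → ℝ → ℝ))
    (hΛ : Λ = {h : ι → ℝ → ℝ | (∀ p, MemLp (h p) 2 μ) ∧ (∀ p, 0 ≤ᵐ[μ] h p) ∧
      ∀ w, ∑ p ∈ Finset.univ.filter (fun p => od p = w), ∫ t, h p t ∂μ = Q w})
    (g : ι → ℝ → ℝ) (hg : ∀ p, MemLp (g p) 2 μ) :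
    ∃ v : W → ℝ,
      (∀ w, ∑ p ∈ Finset.univ.filter (fun p => od p = w),
        ∫ t, max (g p t + v w) 0 ∂μ = Q w) ∧
      (fun p t => max (g p t + v (od p)) 0) ∈ Λ ∧
      (∀ h ∈ Λ,
        ∑ p : ι, ∫ t, (max (g p t + v (od p)) 0 - g p t) ^ 2 ∂μ ≤
          ∑ p : ι, ∫ t, (h p t - g p t) ^ 2 ∂μ) ∧
      (∀ h ∈ Λ,
        (∑ p : ι, ∫ t, (h p t - g p t) ^ 2 ∂μ =
          ∑ p : ι, ∫ t, (max (g p t + v (od p)) 0 - g p t) ^ 2 ∂μ) →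
        ∀ p, h p =ᵐ[μ] fun t => max (g p t + v (od p)) 0) := by
  -- basic measure facts
  haveI hfin : IsFiniteMeasure μ := by
    rw [hμ]
    refine ⟨?_⟩
    rw [Measure.restrict_apply_univ, Real.volume_Icc]
    exact ENNReal.ofReal_lt_top
  set m : ℝ := (μ Set.univ).toReal with hm
  have hμuniv : μ Set.univ = ENNReal.ofReal (t_f - t₀) := by
    rw [hμ, Measure.restrict_apply_univ, Real.volume_Icc]
  have hm0 : 0 < m := by
    rw [hm, hμuniv, ENNReal.toReal_ofReal (by linarith)]
    linarith
  -- integrability helpers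
  have hgint : ∀ p, Integrable (g p) μ := fun p => (hg p).integrable one_le_two
  have hmax : ∀ (p : ι) (c : ℝ), Integrable (fun t => max (g p t + c) 0) μ := fun p c =>
    ((hgint p).add (integrable_const c)).pos_part
  have hmaxL2 : ∀ (p : ι) (c : ℝ), MemLp (fun t => max (g p t + c) 0) 2 μ := by
    intro p c
    have h1 : MemLp (fun t => g p t + c) 2 μ := (hg p).add (memLp_const c)
    refine h1.of_le (h1.aestronglyMeasurable.sup aestronglyMeasurable_const) ?_
    filter_upwards with t
    rw [Real.norm_eq_abs, Real.norm_eq_abs, abs_of_nonneg (le_max_right _ _)]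
    exact max_le (le_abs_self _) (abs_nonneg _)
  -- the per-OD-pair function F and existence of the threshold v
  have hexist : ∀ w : W, ∃ c : ℝ,
      ∑ p ∈ Finset.univ.filter (fun p => od p = w), ∫ t, max (g p t + c) 0 ∂μ = Q w := by
    intro w
    set S := Finset.univ.filter (fun p : ι => od p = w) with hS
    have hSne : S.Nonempty := by
      obtain ⟨p, hp⟩ := hod w
      exact ⟨p, by simp [hS, hp]⟩
    set F : ℝ → ℝ := fun c => ∑ p ∈ S, ∫ t, max (g p t + c) 0 ∂μ with hF
    -- continuity
    have hFcont : Continuous F := by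
      refine continuous_finset_sum _ fun p _ => ?_
      have hlip : LipschitzWith m.toNNReal (fun c => ∫ t, max (g p t + c) 0 ∂μ) := by
        rw [lipschitzWith_iff_dist_le_mul]
        intro a b
        rw [Real.dist_eq, Real.dist_eq, Real.coe_toNNReal m hm0.le]
        rw [← integral_sub (hmax p a) (hmax p b)]
        calc |∫ t, (max (g p t + a) 0 - max (g p t + b) 0) ∂μ|
            ≤ ∫ t, |max (g p t + a) 0 - max (g p t + b) 0| ∂μ := by
              simpa [Real.norm_eq_abs] using
                norm_integral_le_integral_norm (fun t => max (g p t + a) 0 - max (g p t + b) 0)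
          _ ≤ ∫ _t, |a - b| ∂μ := by
              refine integral_mono ((hmax p a).sub (hmax p b)).abs (integrable_const _) ?_
              intro t
              calc |max (g p t + a) 0 - max (g p t + b) 0| ≤ |(g p t + a) - (g p t + b)| :=
                    abs_max_sub_max_le_abs _ _ _
                _ = |a - b| := by ring_nf
          _ = m * |a - b| := by rw [integral_const, smul_eq_mul]; rfl
      exact hlip.continuous
    -- monotonicity
    have hFmono : ∀ a b : ℝ, a ≤ b → F a ≤ F b := by
      intro a b hab
      refine Finset.sum_le_sum fun p _ => ?_
      refine integral_mono (hmax p a) (hmax p b) fun t => ?_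
      exact max_le_max (by linarith) le_rfl
    -- F is large for large c
    set C : ℝ := ∑ p ∈ S, ∫ t, g p t ∂μ with hC
    set n : ℝ := (S.card : ℝ) with hn
    have hn0 : 0 < n := by
      rw [hn]
      exact_mod_cast Finset.card_pos.mpr hSne
    have hlarge : ∀ c : ℝ, C + n * (m * c) ≤ F c := by
      intro c
      have : ∀ p ∈ S, (∫ t, g p t ∂μ) + m * c ≤ ∫ t, max (g p t + c) 0 ∂μ := by
        intro p _
        have : (∫ t, (g p t + c) ∂μ) ≤ ∫ t, max (g p t + c) 0 ∂μ :=
          integral_mono ((hgint p).add (integrable_const c)) (hmax p c)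
            (fun t => le_max_left _ _)
        rwa [integral_add (hgint p) (integrable_const c), integral_const, smul_eq_mul] at this
      calc C + n * (m * c) = ∑ p ∈ S, ((∫ t, g p t ∂μ) + m * c) := by
            rw [Finset.sum_add_distrib, ← hC]
            simp [hn, mul_assoc, Finset.sum_const, nsmul_eq_mul]
        _ ≤ F c := Finset.sum_le_sum this
    obtain ⟨c₁, hc₁⟩ : ∃ c₁, Q w ≤ F c₁ := by
      refine ⟨(Q w - C) / (n * m), ?_⟩
      have h1 : C + n * (m * ((Q w - C) / (n * m))) = Q w := by
        field_simp
        ring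
      linarith [hlarge ((Q w - C) / (n * m))]
    -- F tends to 0 along -n
    have hsmall : ∃ c₀ : ℝ, F c₀ ≤ Q w := by
      have htend : Filter.Tendsto (fun k : ℕ => F (-(k : ℝ))) Filter.atTop (nhds 0) := by
        have : ∀ p ∈ S, Filter.Tendsto (fun k : ℕ => ∫ t, max (g p t + -(k : ℝ)) 0 ∂μ)
            Filter.atTop (nhds 0) := by
          intro p _
          have hT : Filter.Tendsto (fun k : ℕ => ∫ t, max (g p t + -(k : ℝ)) 0 ∂μ)
              Filter.atTop (nhds (∫ _t, (0 : ℝ) ∂μ)) := by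
            refine tendsto_integral_of_dominated_convergence (fun t => max (g p t) 0)
              (fun k => (hmax p (-(k : ℝ))).aestronglyMeasurable) ((hgint p).pos_part) ?_ ?_
            · intro k
              filter_upwards with t
              rw [Real.norm_eq_abs, abs_of_nonneg (le_max_right _ _)]
              have hk0 : (0 : ℝ) ≤ (k : ℝ) := Nat.cast_nonneg k
              exact max_le_max (by linarith) le_rfl
            · filter_upwards with t
              refine Filter.Tendsto.congr' ?_ tendsto_const_nhds
              have hev : ∀ᶠ k : ℕ in Filter.atTop, g p t ≤ (k : ℝ) := by
                obtain ⟨N, hN⟩ := exists_nat_ge (g p t)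
                exact Filter.eventually_atTop.mpr ⟨N, fun k hk => hN.trans (by exact_mod_cast hk)⟩
              filter_upwards [hev] with k hk
              rw [max_eq_right (by linarith)]
          simpa using hT
        have := tendsto_finset_sum S this
        simpa [hF] using this
      have : ∀ᶠ k : ℕ in Filter.atTop, F (-(k : ℝ)) < Q w :=
        htend.eventually (eventually_lt_nhds (hQ w))
      obtain ⟨k, hk⟩ := this.exists
      exact ⟨-(k : ℝ), hk.le⟩
    obtain ⟨c₀, hc₀⟩ := hsmall
    -- intermediate value theorem
    have hab : min c₀ c₁ ≤ c₁ := min_le_right _ _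
    have h1 : F (min c₀ c₁) ≤ Q w := (hFmono _ _ (min_le_left _ _)).trans hc₀
    have := intermediate_value_Icc hab hFcont.continuousOn
    obtain ⟨c, _, hc⟩ := this ⟨h1, hc₁⟩
    exact ⟨c, hc⟩
  choose v hv using hexist
  refine ⟨v, hv, ?_, ?_, ?_⟩
  -- set up common facts about h* := fun p t => max (g p t + v (od p)) 0
  · -- membership in Λ
    rw [hΛ]
    refine ⟨fun p => hmaxL2 p _, fun p => Filter.Eventually.of_forall fun t => le_max_right _ _,
      fun w => ?_⟩
    rw [← hv w]
    refine Finset.sum_congr rfl fun p hp => ?_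
    rw [Finset.mem_filter] at hp
    simp only [hp.2]
  all_goals {
    intro h hhΛ
    rw [hΛ] at hhΛ
    obtain ⟨hh2, hh0, hhQ⟩ := hhΛ
    set hs : ι → ℝ → ℝ := fun p t => max (g p t + v (od p)) 0 with hhs
    have hsL2 : ∀ p, MemLp (hs p) 2 μ := fun p => hmaxL2 p _
    have hsint : ∀ p, Integrable (hs p) μ := fun p => hmax p _
    have hhint : ∀ p, Integrable (h p) μ := fun p => (hh2 p).integrable one_le_two
    have hA2 : ∀ p, MemLp (fun t => h p t - hs p t) 2 μ := fun p => (hh2 p).sub (hsL2 p)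
    have hB2 : ∀ p, MemLp (fun t => hs p t - g p t) 2 μ := fun p => (hsL2 p).sub (hg p)
    have hintA2 : ∀ p, Integrable (fun t => (h p t - hs p t) ^ 2) μ := fun p => by
      simpa [pow_two] using int_mul_L2 (hA2 p) (hA2 p)
    have hintB2 : ∀ p, Integrable (fun t => (hs p t - g p t) ^ 2) μ := fun p => by
      simpa [pow_two] using int_mul_L2 (hB2 p) (hB2 p)
    have hintAB : ∀ p, Integrable (fun t => (h p t - hs p t) * (hs p t - g p t)) μ :=
      fun p => int_mul_L2 (hA2 p) (hB2 p)
    -- expansion of the square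
    have hexpand : ∀ p, (∫ t, (h p t - g p t) ^ 2 ∂μ) =
        (∫ t, (h p t - hs p t) ^ 2 ∂μ) +
          (2 * ∫ t, (h p t - hs p t) * (hs p t - g p t) ∂μ) +
          ∫ t, (hs p t - g p t) ^ 2 ∂μ := by
      intro p
      have hfun : (fun t => (h p t - g p t) ^ 2) = fun t =>
          ((h p t - hs p t) ^ 2 + 2 * ((h p t - hs p t) * (hs p t - g p t))) +
            (hs p t - g p t) ^ 2 := by
        funext t
        ring
      have hI2 : Integrable (fun t => 2 * ((h p t - hs p t) * (hs p t - g p t))) μ :=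
        (hintAB p).const_mul 2
      have hI1 : Integrable (fun t =>
          (h p t - hs p t) ^ 2 + 2 * ((h p t - hs p t) * (hs p t - g p t))) μ :=
        (hintA2 p).add hI2
      rw [hfun, integral_add hI1 (hintB2 p), integral_add (hintA2 p) hI2,
        integral_const_mul]
    -- cross term is bounded below
    have hcross : ∀ p, v (od p) * ((∫ t, h p t ∂μ) - ∫ t, hs p t ∂μ) ≤
        ∫ t, (h p t - hs p t) * (hs p t - g p t) ∂μ := by
      intro p
      have hpt : ∀ᵐ t ∂μ, v (od p) * (h p t - hs p t) ≤
          (h p t - hs p t) * (hs p t - g p t) := by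
        filter_upwards [hh0 p] with t ht0
        exact key_pt ht0
      have := integral_mono_ae (((hhint p).sub (hsint p)).const_mul (v (od p)))
        (hintAB p) hpt
      simp only [Pi.sub_apply] at this
      rwa [integral_const_mul, integral_sub (hhint p) (hsint p)] at this
    -- sum of the lower bounds is zero
    have hsum0 : ∑ p : ι, v (od p) * ((∫ t, h p t ∂μ) - ∫ t, hs p t ∂μ) = 0 := by
      have hfib := Finset.sum_fiberwise_eq_sum_filter Finset.univ Finset.univ od
        (fun p => v (od p) * ((∫ t, h p t ∂μ) - ∫ t, hs p t ∂μ))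
      have hfilter : (Finset.univ.filter fun p : ι => od p ∈ Finset.univ) = Finset.univ := by
        simp
      rw [hfilter] at hfib
      rw [← hfib]
      refine Finset.sum_eq_zero fun w _ => ?_
      have hsw : ∀ p ∈ Finset.univ.filter (fun p : ι => od p = w),
          v (od p) * ((∫ t, h p t ∂μ) - ∫ t, hs p t ∂μ) =
            v w * ((∫ t, h p t ∂μ) - ∫ t, hs p t ∂μ) := by
        intro p hp
        rw [Finset.mem_filter] at hp
        rw [hp.2]
      rw [Finset.sum_congr rfl hsw, ← Finset.mul_sum]
      have h1 : ∑ p ∈ Finset.univ.filter (fun p : ι => od p = w),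
          ((∫ t, h p t ∂μ) - ∫ t, hs p t ∂μ) = 0 := by
        rw [Finset.sum_sub_distrib, hhQ w]
        have h2 : ∑ p ∈ Finset.univ.filter (fun p : ι => od p = w), ∫ t, hs p t ∂μ = Q w := by
          rw [← hv w]
          refine Finset.sum_congr rfl fun p hp => ?_
          rw [Finset.mem_filter] at hp
          simp only [hhs, hp.2]
        rw [h2, sub_self]
      rw [h1, mul_zero]
    have hcross_sum : 0 ≤ ∑ p : ι, ∫ t, (h p t - hs p t) * (hs p t - g p t) ∂μ := by
      rw [← hsum0]
      exact Finset.sum_le_sum fun p _ => hcross p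
    have hA2_sum : 0 ≤ ∑ p : ι, ∫ t, (h p t - hs p t) ^ 2 ∂μ :=
      Finset.sum_nonneg fun p _ => integral_nonneg fun t => sq_nonneg _
    have htotal : ∑ p : ι, ∫ t, (h p t - g p t) ^ 2 ∂μ =
        (∑ p : ι, ∫ t, (h p t - hs p t) ^ 2 ∂μ) +
          (2 * ∑ p : ι, ∫ t, (h p t - hs p t) * (hs p t - g p t) ∂μ) +
          ∑ p : ι, ∫ t, (hs p t - g p t) ^ 2 ∂μ := by
      rw [Finset.mul_sum, ← Finset.sum_add_distrib, ← Finset.sum_add_distrib]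
      exact Finset.sum_congr rfl fun p _ => hexpand p
    first
    | -- optimality
      ( rw [htotal]
        nlinarith [hcross_sum, hA2_sum] )
    | -- uniqueness
      ( intro heq p
        rw [htotal] at heq
        have hAzero : ∑ p : ι, ∫ t, (h p t - hs p t) ^ 2 ∂μ = 0 := by
          nlinarith [hcross_sum, hA2_sum]
        have hAp : ∫ t, (h p t - hs p t) ^ 2 ∂μ = 0 := by
          have := (Finset.sum_eq_zero_iff_of_nonneg
            (fun q _ => integral_nonneg fun t => sq_nonneg (h q t - hs q t))).mp hAzero
          exact this p (Finset.mem_univ p)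
        have := (integral_eq_zero_iff_of_nonneg_ae
          (Filter.Eventually.of_forall fun t => sq_nonneg (h p t - hs p t)) (hintA2 p)).mp hAp
        filter_upwards [this] with t ht
        have : (h p t - hs p t) ^ 2 = 0 := ht
        have := pow_eq_zero_iff (n := 2) (by norm_num) |>.mp this
        have : h p t = hs p t := by linarith [sub_eq_zero.mp this]
        exact this )
  }
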